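/- Let T be a continuous Archimedean t-norm with additive generator t (with t(0) < ∞ allowed), and let R be a fuzzy relation on U that is ε-T-transitive in the sense that T(T(R(x,y),R(y,z)), ε) ≤ R(x,z) for all x,y,z. Define d(x,y) = t(R(x,y)). Then d satisfies the relaxed triangle inequality d(x,z) ≤ t(ε) + d(x,y) + d(y,z) for all x,y,z ∈ U. -/

import Mathlib

open Set ENNReal

/-- For a continuous Archimedean t-norm `T` with additive generator `t`
(`T(x,y) = t⁻¹(min(t(0), t(x)+t(y)))`), if the fuzzy relation `R` satisfies
`T(T(R(x,y),R(y,z)), ε) ≤ R(x,z)` for all `x,y,z`, then `d(x,y) = t(R(x,y))`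
satisfies the relaxed triangle inequality `d(x,z) ≤ t(ε) + d(x,y) + d(y,z)`. -/
theorem stmt_16 {U : Type*}
    (t : ℝ → ℝ≥0∞) (tinv : ℝ≥0∞ → ℝ)
    (htcont : ContinuousOn t (Icc (0:ℝ) 1))
    (htanti : StrictAntiOn t (Icc (0:ℝ) 1))
    (ht1 : t 1 = 0)
    (htinvt : ∀ x ∈ Icc (0:ℝ) 1, tinv (t x) = x)
    (htinv0 : ∀ s : ℝ≥0∞, t 0 ≤ s → tinv s = 0)
    (htinvmem : ∀ s : ℝ≥0∞, tinv s ∈ Icc (0:ℝ) 1)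
    (httinv : ∀ s : ℝ≥0∞, s ≤ t 0 → t (tinv s) = s)
    (T : ℝ → ℝ → ℝ)
    (hTgen : ∀ a b : ℝ, T a b = tinv (min (t 0) (t a + t b)))
    (R : U → U → ℝ) (hR : ∀ x y, R x y ∈ Icc (0:ℝ) 1)
    (ε : ℝ) (hε : ε ∈ Icc (0:ℝ) 1)
    (htrans : ∀ x y z : U, T (T (R x y) (R y z)) ε ≤ R x z) :
    ∀ x y z : U, t (R x z) ≤ t ε + t (R x y) + t (R y z) := by
  intro x y z
  -- antitone version of t
  have hanti : ∀ a ∈ Icc (0:ℝ) 1, ∀ b ∈ Icc (0:ℝ) 1, a ≤ b → t b ≤ t a := by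
    intro a ha b hb hab
    rcases lt_or_eq_of_le hab with h | h
    · exact (htanti ha hb h).le
    · simp [h]
  -- t(T a b) ≤ t a + t b
  have key : ∀ a b : ℝ, t (T a b) ≤ t a + t b := by
    intro a b
    rw [hTgen]
    rw [httinv _ (min_le_left _ _)]
    exact min_le_right _ _
  have hTmem : ∀ a b : ℝ, T a b ∈ Icc (0:ℝ) 1 := by
    intro a b; rw [hTgen]; exact htinvmem _
  have h1 : t (R x z) ≤ t (T (T (R x y) (R y z)) ε) :=
    hanti _ (hTmem _ _) _ (hR x z) (htrans x y z)
  calc t (R x z) ≤ t (T (T (R x y) (R y z)) ε) := h1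
    _ ≤ t (T (R x y) (R y z)) + t ε := key _ _
    _ ≤ (t (R x y) + t (R y z)) + t ε := add_le_add_left (key _ _) _
    _ = t ε + t (R x y) + t (R y z) := by ring
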